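/- Let α > −1 and R > 0. The identity y_{n+1}·ȳ_n = (y_n·x̄_n + x_{n+1}·ȳ_n)·(y_{n+1}·x̄_{n+1} + x_{n+2}·ȳ_{n+1}) / ((x_n + x̄_{n+1})·(x_{n+1} + x̄_{n+2})) holds for all integers n ≥ 1 if and only if α = 0. -/

import Mathlib

open Polynomial

/-- `x_n = α + (2n² + 2(R−1)n − R)/((n−1)+R)`. -/
noncomputable def xKL (α R : ℝ) (n : ℕ) : ℝ :=
  α + (2 * (n : ℝ) ^ 2 + 2 * (R - 1) * (n : ℝ) - R) / (((n : ℝ) - 1) + R)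

/-- `y_n = n(n+α)(n+1+R)/(n+R)`. -/
noncomputable def yKL (α R : ℝ) (n : ℕ) : ℝ :=
  (n : ℝ) * ((n : ℝ) + α) * ((n : ℝ) + 1 + R) / ((n : ℝ) + R)

/-- `x̄_n = α + (2n² + 2(R−1)n − R)/(n+R)`. -/
noncomputable def xbarKL (α R : ℝ) (n : ℕ) : ℝ :=
  α + (2 * (n : ℝ) ^ 2 + 2 * (R - 1) * (n : ℝ) - R) / ((n : ℝ) + R)

/-- `ȳ_n = n(n+α)(n−1+R)/(n+R)`. -/
noncomputable def ybarKL (α R : ℝ) (n : ℕ) : ℝ :=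
  (n : ℝ) * ((n : ℝ) + α) * ((n : ℝ) - 1 + R) / ((n : ℝ) + R)

set_option maxHeartbeats 2000000 in
private lemma auxKL_id (x R : ℝ) (hx : 1 ≤ x) (hR : 0 < R) :
    (x + 1) * (x + 1 + 0) * (x + 1 + 1 + R) / (x + 1 + R) * (x * (x + 0) * (x - 1 + R) / (x + R)) =
    (x * (x + 0) * (x + 1 + R) / (x + R) * (0 + (2 * x ^ 2 + 2 * (R - 1) * x - R) / (x + R)) +
          (0 + (2 * (x + 1) ^ 2 + 2 * (R - 1) * (x + 1) - R) / (x + 1 - 1 + R)) *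
            (x * (x + 0) * (x - 1 + R) / (x + R))) *
        ((x + 1) * (x + 1 + 0) * (x + 1 + 1 + R) / (x + 1 + R) *
            (0 + (2 * (x + 1) ^ 2 + 2 * (R - 1) * (x + 1) - R) / (x + 1 + R)) +
          (0 + (2 * (x + 2) ^ 2 + 2 * (R - 1) * (x + 2) - R) / (x + 2 - 1 + R)) *
            ((x + 1) * (x + 1 + 0) * (x + 1 - 1 + R) / (x + 1 + R))) /
      ((0 + (2 * x ^ 2 + 2 * (R - 1) * x - R) / (x - 1 + R) +
          (0 + (2 * (x + 1) ^ 2 + 2 * (R - 1) * (x + 1) - R) / (x + 1 + R))) *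
        (0 + (2 * (x + 1) ^ 2 + 2 * (R - 1) * (x + 1) - R) / (x + 1 - 1 + R) +
          (0 + (2 * (x + 2) ^ 2 + 2 * (R - 1) * (x + 2) - R) / (x + 2 + R)))) := by
  have d0 : (0:ℝ) < x - 1 + R := by linarith
  have d1 : (0:ℝ) < x + R := by linarith
  have d2 : (0:ℝ) < x + 1 + R := by linarith
  have d2' : (0:ℝ) < x + 1 - 1 + R := by linarith
  have d3 : (0:ℝ) < x + 2 + R := by linarith
  have hA : (0:ℝ) < 2 * x ^ 2 + 2 * (R - 1) * x - R := by nlinarith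
  have hB : (0:ℝ) < 2 * (x + 1) ^ 2 + 2 * (R - 1) * (x + 1) - R := by nlinarith
  have hC : (0:ℝ) < 2 * (x + 2) ^ 2 + 2 * (R - 1) * (x + 2) - R := by nlinarith
  have hS1 : (0:ℝ) < 0 + (2 * x ^ 2 + 2 * (R - 1) * x - R) / (x - 1 + R) +
      (0 + (2 * (x + 1) ^ 2 + 2 * (R - 1) * (x + 1) - R) / (x + 1 + R)) := by
    have t1 := div_pos hA d0
    have t2 := div_pos hB d2
    linarith
  have hS2 : (0:ℝ) < 0 + (2 * (x + 1) ^ 2 + 2 * (R - 1) * (x + 1) - R) / (x + 1 - 1 + R) +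
      (0 + (2 * (x + 2) ^ 2 + 2 * (R - 1) * (x + 2) - R) / (x + 2 + R)) := by
    have t1 := div_pos hB d2'
    have t2 := div_pos hC d3
    linarith
  rw [eq_div_iff (mul_pos hS1 hS2).ne']
  have e2' : x + 1 - 1 + R = x + R := by ring
  have e3' : x + 2 - 1 + R = x + 1 + R := by ring
  rw [e2', e3']
  field_simp [d0.ne', d1.ne', d2.ne', d3.ne']
  ring

theorem stmt11 (α R : ℝ) (hα : -1 < α) (hR : 0 < R) :
    (∀ n : ℕ, 1 ≤ n →
      yKL α R (n + 1) * ybarKL α R n =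
        (yKL α R n * xbarKL α R n + xKL α R (n + 1) * ybarKL α R n) *
          (yKL α R (n + 1) * xbarKL α R (n + 1) + xKL α R (n + 2) * ybarKL α R (n + 1)) /
        ((xKL α R n + xbarKL α R (n + 1)) * (xKL α R (n + 1) + xbarKL α R (n + 2))))
    ↔ α = 0 := by
  have h1R : (0:ℝ) < 1 + R := by linarith
  have h2R : (0:ℝ) < 2 + R := by linarith
  have h3R : (0:ℝ) < 3 + R := by linarith
  constructor
  · intro h
    have E := h 1 (le_refl 1)
    simp only [xKL, yKL, xbarKL, ybarKL] at E
    norm_num at E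
    have hs1 : (0:ℝ) < α + (2 + 2 * (R - 1) - R) / R + (α + (8 + 2 * (R - 1) * 2 - R) / (2 + R)) := by
      have e1 : (2 + 2 * (R - 1) - R) / R = 1 := by field_simp; ring
      rw [e1]
      have : (1:ℝ) < (8 + 2 * (R - 1) * 2 - R) / (2 + R) := by
        rw [lt_div_iff₀ h2R]; nlinarith
      linarith
    have hs2 : (0:ℝ) < α + (8 + 2 * (R - 1) * 2 - R) / (1 + R) + (α + (18 + 2 * (R - 1) * 3 - R) / (3 + R)) := by
      have e1 : (1:ℝ) < (8 + 2 * (R - 1) * 2 - R) / (1 + R) := by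
        rw [lt_div_iff₀ h1R]; nlinarith
      have e2 : (1:ℝ) < (18 + 2 * (R - 1) * 3 - R) / (3 + R) := by
        rw [lt_div_iff₀ h3R]; nlinarith
      linarith
    rw [eq_div_iff (mul_pos hs1 hs2).ne'] at E
    field_simp at E
    have key : α * ((α+1)*((α+2)*((α+3)*(16*R*(24+116*R+234*R^2+255*R^3+162*R^4+60*R^5+12*R^6+R^7))))) = 0 := by
      linear_combination (-2 * R * (R^5+9*R^4+31*R^3+51*R^2+40*R+12) : ℝ) * E
    have hpoly : (0:ℝ) < 24+116*R+234*R^2+255*R^3+162*R^4+60*R^5+12*R^6+R^7 := by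
      nlinarith [pow_pos hR 2, pow_pos hR 3, pow_pos hR 4, pow_pos hR 5, pow_pos hR 6, pow_pos hR 7]
    have hpos : (0:ℝ) < (α+1)*((α+2)*((α+3)*(16*R*(24+116*R+234*R^2+255*R^3+162*R^4+60*R^5+12*R^6+R^7)))) := by
      have a1 : (0:ℝ) < α + 1 := by linarith
      have a2 : (0:ℝ) < α + 2 := by linarith
      have a3 : (0:ℝ) < α + 3 := by linarith
      positivity
    exact (mul_eq_zero.mp key).resolve_right hpos.ne'
  · rintro rfl
    intro n hn
    have hn' : (1:ℝ) ≤ (n:ℝ) := by exact_mod_cast hn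
    simp only [xKL, yKL, xbarKL, ybarKL]
    push_cast
    exact auxKL_id (n:ℝ) R hn' hR
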